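/- arXiv:1211.6871 — 3 statements merged into one kernel-verified Lean document; each statement's English description precedes it below -/
import Mathlib

section
/- Let (R, m) be a commutative local ring with maximal ideal m and let I be a proper ideal of R. Then the double D(R, I) = {(a, b) ∈ R × R : a − b ∈ I}, a subring of R × R, is a local ring whose maximal ideal is {(a, b) ∈ D(R, I) : a ∈ m} (equivalently, {(a, b) ∈ D(R, I) : a ∈ m and b ∈ m}). -/
/-- The double `D(R, I) = {(a, b) ∈ R × R : a − b ∈ I}` of a ring `R` along an
ideal `I`, as a subring of `R × R`. -/
def Double (R : Type*) [CommRing R] (I : Ideal R) : Subring (R × R) where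
  carrier := {x | x.1 - x.2 ∈ I}
  mul_mem' := by
    intro x y hx hy
    simp only [Set.mem_setOf_eq, Prod.fst_mul, Prod.snd_mul] at *
    have h : x.1 * y.1 - x.2 * y.2 = x.1 * (y.1 - y.2) + (x.1 - x.2) * y.2 := by ring
    rw [h]
    exact I.add_mem (I.mul_mem_left _ hy) (I.mul_mem_right _ hx)
  one_mem' := by simp
  add_mem' := by
    intro x y hx hy
    simp only [Set.mem_setOf_eq, Prod.fst_add, Prod.snd_add] at *
    have h : x.1 + y.1 - (x.2 + y.2) = (x.1 - x.2) + (y.1 - y.2) := by ring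
    rw [h]
    exact I.add_mem hx hy
  zero_mem' := by simp
  neg_mem' := by
    intro x hx
    simp only [Set.mem_setOf_eq, Prod.fst_neg, Prod.snd_neg] at *
    have h : -x.1 - -x.2 = -(x.1 - x.2) := by ring
    rw [h]
    exact I.neg_mem hx

lemma double_isUnit_iff {R : Type*} [CommRing R] [IsLocalRing R] {I : Ideal R}
    (hI : I ≠ ⊤) (x : Double R I) :
    IsUnit x ↔ IsUnit (x : R × R).1 := by
  have hIm : I ≤ IsLocalRing.maximalIdeal R := IsLocalRing.le_maximalIdeal hI
  constructor
  · intro h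
    exact (RingHom.fst R R).isUnit_map ((Double R I).subtype.isUnit_map h)
  · intro ha
    have hx : (x : R × R).1 - (x : R × R).2 ∈ I := x.2
    have hx' : (x : R × R).2 - (x : R × R).1 ∈ I := by
      simpa [neg_sub] using I.neg_mem hx
    have hb : IsUnit (x : R × R).2 := by
      by_contra hb
      have h2 : (x : R × R).2 ∈ IsLocalRing.maximalIdeal R := hb
      have h1 : (x : R × R).1 ∈ IsLocalRing.maximalIdeal R := by
        simpa using add_mem (hIm hx) h2
      exact h1 ha
    obtain ⟨ua, hua⟩ := ha
    obtain ⟨ub, hub⟩ := hb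
    have key : ((ua⁻¹ : Rˣ) : R) - ((ub⁻¹ : Rˣ) : R)
        = (ua⁻¹ : Rˣ) * ((x : R × R).2 - (x : R × R).1) * (ub⁻¹ : Rˣ) := by
      rw [← hua, ← hub]
      have : ((ua⁻¹ : Rˣ) : R) * ((ub : Rˣ) - (ua : Rˣ)) * (ub⁻¹ : Rˣ)
          = (ua⁻¹ : Rˣ) * ((ub : Rˣ) * (ub⁻¹ : Rˣ)) - ((ua⁻¹ : Rˣ) * (ua : Rˣ)) * (ub⁻¹ : Rˣ) := by
        ring
      rw [this, Units.mul_inv, Units.inv_mul, mul_one, one_mul]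
    have hinv : ((ua⁻¹ : Rˣ) : R) - ((ub⁻¹ : Rˣ) : R) ∈ I := by
      rw [key]
      exact I.mul_mem_right _ (I.mul_mem_left _ hx')
    refine IsUnit.of_mul_eq_one (a := x) ⟨(((ua⁻¹ : Rˣ) : R), ((ub⁻¹ : Rˣ) : R)), hinv⟩ ?_
    ext
    · show (x : R × R).1 * ((ua⁻¹ : Rˣ) : R) = 1
      rw [← hua]; exact ua.mul_inv
    · show (x : R × R).2 * ((ub⁻¹ : Rˣ) : R) = 1
      rw [← hub]; exact ub.mul_inv

/-- if `(R, 𝔪)` is a commutative local ring and `I` a proper ideal,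
then the double `D(R, I)` is a local ring, with maximal ideal
`{(a, b) ∈ D(R, I) : a ∈ 𝔪}`, equivalently `{(a, b) ∈ D(R, I) : a ∈ 𝔪 ∧ b ∈ 𝔪}`. -/
theorem double_isLocalRing
    (R : Type*) [CommRing R] [IsLocalRing R]
    (I : Ideal R) (hI : I ≠ ⊤) :
    ∃ h : IsLocalRing (Double R I),
      (∀ x : Double R I,
        x ∈ @IsLocalRing.maximalIdeal (Double R I) _ h ↔
          (x : R × R).1 ∈ IsLocalRing.maximalIdeal R) ∧
      (∀ x : Double R I,
        x ∈ @IsLocalRing.maximalIdeal (Double R I) _ h ↔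
          ((x : R × R).1 ∈ IsLocalRing.maximalIdeal R ∧
            (x : R × R).2 ∈ IsLocalRing.maximalIdeal R)) := by
  have hIm : I ≤ IsLocalRing.maximalIdeal R := IsLocalRing.le_maximalIdeal hI
  have hnt : Nontrivial (Double R I) := by
    refine ⟨0, 1, fun h => ?_⟩
    have : ((0 : Double R I) : R × R).1 = ((1 : Double R I) : R × R).1 := by rw [h]
    simpa using this
  have hloc : IsLocalRing (Double R I) := by
    refine IsLocalRing.of_nonunits_add ?_
    intro a b ha hb
    rw [mem_nonunits_iff, double_isUnit_iff hI] at ha hb ⊢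
    have ha' : (a : R × R).1 ∈ IsLocalRing.maximalIdeal R := ha
    have hb' : (b : R × R).1 ∈ IsLocalRing.maximalIdeal R := hb
    have h : ((a + b : Double R I) : R × R).1 ∈ IsLocalRing.maximalIdeal R :=
      add_mem ha' hb'
    exact h
  refine ⟨hloc, ?_, ?_⟩
  · intro x
    rw [IsLocalRing.mem_maximalIdeal, mem_nonunits_iff, double_isUnit_iff hI]
    exact Iff.rfl
  · intro x
    rw [IsLocalRing.mem_maximalIdeal, mem_nonunits_iff, double_isUnit_iff hI]
    show (↑x : R × R).1 ∈ IsLocalRing.maximalIdeal R ↔ _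
    constructor
    · intro h
      refine ⟨h, ?_⟩
      have hx : (x : R × R).1 - (x : R × R).2 ∈ I := x.2
      have := sub_mem h (hIm hx)
      simpa using this
    · exact fun h => h.1
end

section
/- Let R be a commutative ring and I an ideal of R such that the quotient map q : R → R/I is a retract, i.e. there is a ring homomorphism f : R/I → R with q ∘ f = id. Let n ≥ 3 and let v ∈ Um_n(R, I) be such that v·ε = e_1 for some ε ∈ E_n(R). Then there exists ε' ∈ E_n(R, I) with v·ε' = e_1; that is, if the class of v is trivial in Um_n(R)/E_n(R), then it is trivial in Um_n(R, I)/E_n(R, I). -/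
open Matrix

def Um (n : ℕ) (R : Type*) [CommRing R] : Set (Fin n → R) :=
  {v | ∃ w : Fin n → R, ∑ i, v i * w i = 1}

def UmRel (n : ℕ) (R : Type*) [CommRing R] (I : Ideal R) : Set (Fin n → R) :=
  {v | v ∈ Um n R ∧ ∀ i : Fin n, if i.val = 0 then v i - 1 ∈ I else v i ∈ I}

def Elem (n : ℕ) (R : Type*) [CommRing R] : Subgroup (GL (Fin n) R) :=
  Subgroup.closure {g | ∃ i j : Fin n, i ≠ j ∧ ∃ c : R,
    (g : Matrix (Fin n) (Fin n) R) = Matrix.transvection i j c}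

def ElemRel (n : ℕ) (R : Type*) [CommRing R] (I : Ideal R) : Subgroup (GL (Fin n) R) :=
  Subgroup.closure {g | ∃ e ∈ Elem n R, ∃ h : GL (Fin n) R, ∃ i j : Fin n,
    i.val = 1 ∧ j.val = 0 ∧
    (∃ x ∈ I, (h : Matrix (Fin n) (Fin n) R) = Matrix.transvection i j x) ∧
    g = e * h * e⁻¹}

def rowE1 (n : ℕ) (R : Type*) [CommRing R] : Fin n → R :=
  fun i => if i.val = 0 then 1 else 0

section Aux

variable {n : ℕ} {R : Type*} [CommRing R]

/-- A transvection as a unit of the matrix ring. -/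
def tv (i j : Fin n) (hij : i ≠ j) (c : R) : GL (Fin n) R where
  val := transvection i j c
  inv := transvection i j (-c)
  val_inv := by rw [transvection_mul_transvection_same i j hij]; simp
  inv_val := by rw [transvection_mul_transvection_same i j hij]; simp

@[simp] lemma tv_val (i j : Fin n) (hij : i ≠ j) (c : R) :
    (tv i j hij c : Matrix (Fin n) (Fin n) R) = transvection i j c := rfl

lemma tv_mem_Elem (i j : Fin n) (hij : i ≠ j) (c : R) : tv i j hij c ∈ Elem n R :=
  Subgroup.subset_closure ⟨i, j, hij, c, rfl⟩

lemma tv_mul (i j : Fin n) (hij : i ≠ j) (a b : R) :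
    tv i j hij a * tv i j hij b = tv i j hij (a + b) :=
  Units.ext (transvection_mul_transvection_same i j hij a b)

lemma tv_inv (i j : Fin n) (hij : i ≠ j) (a : R) :
    (tv i j hij a)⁻¹ = tv i j hij (-a) :=
  Units.ext rfl

lemma transvection_comm (i j k : Fin n) (hij : i ≠ j) (hik : i ≠ k) (hkj : k ≠ j)
    (c x : R) :
    transvection i k c * transvection k j x =
      transvection i j (c * x) * (transvection k j x * transvection i k c) := by
  have h1 : j ≠ i := hij.symm
  have h2 : j ≠ k := hkj.symm
  simp only [transvection, Matrix.add_mul, Matrix.mul_add, Matrix.one_mul, Matrix.mul_one,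
    Matrix.single_mul_single_same, Matrix.single_mul_single_of_ne (c := c * x) i j k h2 x,
    Matrix.single_mul_single_of_ne (c := c * x) i j i h1 c, Matrix.single_mul_single_of_ne (c := x) k j i h1 c,
    mul_zero, add_zero, Matrix.mul_zero]
  abel

lemma tv_conj (i j k : Fin n) (hij : i ≠ j) (hik : i ≠ k) (hkj : k ≠ j) (c x : R) :
    tv i k hik c * tv k j hkj x * (tv i k hik c)⁻¹ =
      tv i j hij (c * x) * tv k j hkj x := by
  rw [tv_inv]
  apply Units.ext
  simp only [Units.val_mul, tv_val]
  rw [transvection_comm i j k hij hik hkj, mul_assoc, mul_assoc,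
    transvection_mul_transvection_same i k hik, add_neg_cancel, transvection_zero, mul_one]

lemma elemRel_conj {I : Ideal R} {g h : GL (Fin n) R} (hg : g ∈ Elem n R)
    (hh : h ∈ ElemRel n R I) : g * h * g⁻¹ ∈ ElemRel n R I := by
  induction hh using Subgroup.closure_induction with
  | mem x hx =>
    obtain ⟨e, he, h', i, j, hi1, hj0, hx', rfl⟩ := hx
    refine Subgroup.subset_closure ⟨g * e, mul_mem hg he, h', i, j, hi1, hj0, hx', ?_⟩
    group
  | one => simpa using one_mem (ElemRel n R I)
  | mul x y hx hy px py =>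
    have hxy : g * (x * y) * g⁻¹ = (g * x * g⁻¹) * (g * y * g⁻¹) := by group
    rw [hxy]; exact mul_mem px py
  | inv x hx px =>
    have hx' : g * x⁻¹ * g⁻¹ = (g * x * g⁻¹)⁻¹ := by group
    rw [hx']; exact inv_mem px

lemma tv_mem_elemRel (I : Ideal R) (m : ℕ) :
    ∀ (i j : Fin (m + 3)) (hij : i ≠ j) (x : R), x ∈ I →
      tv i j hij x ∈ ElemRel (m + 3) R I := by
  set n' := m + 3 with hn
  have h0 : (0 : ℕ) < n' := by omega
  have h1 : (1 : ℕ) < n' := by omega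
  have h2 : (2 : ℕ) < n' := by omega
  set o : Fin n' := ⟨0, h0⟩ with ho
  set l : Fin n' := ⟨1, h1⟩ with hl
  set t : Fin n' := ⟨2, h2⟩ with ht
  have hlo : l ≠ o := by simp [Fin.ext_iff, hl, ho]
  -- base case
  have base : ∀ x ∈ I, tv l o hlo x ∈ ElemRel n' R I := by
    intro x hx
    exact Subgroup.subset_closure ⟨1, one_mem _, tv l o hlo x, l, o, rfl, rfl,
      ⟨x, hx, rfl⟩, by group⟩
  -- changing the row index
  have step_row : ∀ (i j k : Fin n') (hij : i ≠ j) (hik : i ≠ k) (hkj : k ≠ j),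
      (∀ x ∈ I, tv k j hkj x ∈ ElemRel n' R I) →
      ∀ x ∈ I, tv i j hij x ∈ ElemRel n' R I := by
    intro i j k hij hik hkj hkmem x hx
    have key := tv_conj i j k hij hik hkj 1 x
    rw [one_mul] at key
    have heq : tv i j hij x =
        (tv i k hik 1 * tv k j hkj x * (tv i k hik 1)⁻¹) * (tv k j hkj x)⁻¹ := by
      rw [key]; group
    rw [heq]
    exact mul_mem (elemRel_conj (tv_mem_Elem i k hik 1) (hkmem x hx))
      (inv_mem (hkmem x hx))
  -- changing the column index
  have step_col : ∀ (i j k : Fin n') (hij : i ≠ j) (hik : i ≠ k) (hkj : k ≠ j),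
      (∀ x ∈ I, tv i k hik x ∈ ElemRel n' R I) →
      ∀ x ∈ I, tv i j hij x ∈ ElemRel n' R I := by
    intro i j k hij hik hkj hkmem x hx
    have key := tv_conj i j k hij hik hkj x 1
    rw [mul_one] at key
    have heq : tv i j hij x =
        tv i k hik x * (tv k j hkj 1 * (tv i k hik x)⁻¹ * (tv k j hkj 1)⁻¹) := by
      rw [show tv i k hik x * (tv k j hkj 1 * (tv i k hik x)⁻¹ * (tv k j hkj 1)⁻¹) =
          (tv i k hik x * tv k j hkj 1 * (tv i k hik x)⁻¹) * (tv k j hkj 1)⁻¹ from by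
        group, key]
      group
    rw [heq]
    exact mul_mem (hkmem x hx)
      (elemRel_conj (tv_mem_Elem k j hkj 1) (inv_mem (hkmem x hx)))
  -- rows ≠ 0, column 0
  have hrow0 : ∀ (i : Fin n') (hio : i ≠ o), ∀ x ∈ I, tv i o hio x ∈ ElemRel n' R I := by
    intro i hio
    by_cases hil : i = l
    · subst hil; exact base
    · exact step_row i o l hio hil hlo base
  -- rows ≠ 0, any column
  have hne0 : ∀ (i j : Fin n') (hij : i ≠ j), i ≠ o →
      ∀ x ∈ I, tv i j hij x ∈ ElemRel n' R I := by
    intro i j hij hio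
    by_cases hjo : j = o
    · subst hjo; exact hrow0 i hij
    · exact step_col i j o hij hio (fun hoj => hjo hoj.symm) (hrow0 i hio)
  intro i j hij x hx
  by_cases hio : i = o
  · subst hio
    by_cases hjl : j = l
    · subst hjl
      have hto : t ≠ o := by simp [Fin.ext_iff, ht, ho]
      have htj : t ≠ l := by simp [Fin.ext_iff, ht, hl, Nat.mod_eq_of_lt h1]
      exact step_row o l t hij (fun h => hto h.symm) htj (hne0 t l htj hto) x hx
    · have hljne : l ≠ j := fun h => hjl h.symm
      exact step_row o j l hij (fun h => hlo h.symm) hljne (hne0 l j hljne hlo) x hx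
  · exact hne0 i j hij hio x hx

lemma mapMatrix_transvection (φ : R →+* R) (i j : Fin n) (c : R) :
    φ.mapMatrix (transvection i j c) = transvection i j (φ c) := by
  ext a b
  simp [transvection, RingHom.mapMatrix_apply, Matrix.map_apply, Matrix.add_apply,
    Matrix.one_apply, Matrix.single, Matrix.of_apply, apply_ite φ]

lemma map_mem_Elem (φ : R →+* R) {g : GL (Fin n) R} (hg : g ∈ Elem n R) :
    Matrix.GeneralLinearGroup.map φ g ∈ Elem n R := by
  induction hg using Subgroup.closure_induction with
  | mem x hx =>
    obtain ⟨i, j, hij, c, hc⟩ := hx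
    refine Subgroup.subset_closure ⟨i, j, hij, φ c, ?_⟩
    show φ.mapMatrix (x : Matrix (Fin n) (Fin n) R) = _
    rw [hc, mapMatrix_transvection]
  | one => rw [_root_.map_one]; exact one_mem _
  | mul x y _ _ px py => rw [_root_.map_mul]; exact mul_mem px py
  | inv x _ px => rw [_root_.map_inv]; exact inv_mem px

lemma mul_map_inv_mem (I : Ideal R) (m : ℕ) (φ : R →+* R) (hφ : ∀ x, φ x - x ∈ I)
    {g : GL (Fin (m + 3)) R} (hg : g ∈ Elem (m + 3) R) :
    g * (Matrix.GeneralLinearGroup.map φ g)⁻¹ ∈ ElemRel (m + 3) R I := by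
  induction hg using Subgroup.closure_induction with
  | mem x hx =>
    obtain ⟨i, j, hij, c, hc⟩ := hx
    have hx1 : x = tv i j hij c := Units.ext hc
    have hx2 : Matrix.GeneralLinearGroup.map φ x = tv i j hij (φ c) := by
      apply Units.ext
      have hval : ((Matrix.GeneralLinearGroup.map φ) x).val
          = φ.mapMatrix (x : Matrix (Fin (m + 3)) (Fin (m + 3)) R) := rfl
      rw [hval, hc, mapMatrix_transvection]; rfl
    rw [hx2, hx1, tv_inv, tv_mul]
    exact tv_mem_elemRel I m i j hij (c + -φ c)
      (by simpa [← sub_eq_add_neg] using I.neg_mem (hφ c))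
  | one => rw [_root_.map_one]; simpa using one_mem _
  | mul x y hx hy px py =>
    have heq : (x * y) * (Matrix.GeneralLinearGroup.map φ (x * y))⁻¹ =
        (x * (y * (Matrix.GeneralLinearGroup.map φ y)⁻¹) * x⁻¹) *
          (x * (Matrix.GeneralLinearGroup.map φ x)⁻¹) := by
      rw [_root_.map_mul]; group
    rw [heq]
    exact mul_mem (elemRel_conj hx py) px
  | inv x hx px =>
    have heq : x⁻¹ * (Matrix.GeneralLinearGroup.map φ x⁻¹)⁻¹ =
        x⁻¹ * (x * (Matrix.GeneralLinearGroup.map φ x)⁻¹)⁻¹ * (x⁻¹)⁻¹ := by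
      rw [_root_.map_inv]; group
    rw [heq]
    exact elemRel_conj (inv_mem hx) (inv_mem px)

lemma vecMul_mapMatrix [Fintype (Fin n)] (φ : R →+* R) (v : Fin n → R)
    (A : Matrix (Fin n) (Fin n) R) :
    vecMul (fun i => φ (v i)) (φ.mapMatrix A) = fun j => φ (vecMul v A j) := by
  funext j
  simp [vecMul, dotProduct, RingHom.mapMatrix_apply, Matrix.map_apply, map_sum]

end Aux

/-- if the quotient map `q : R → R/I` is a retract (there is a ring
homomorphism `f : R/I → R` with `q ∘ f = id`), `n = m + 3 ≥ 3`, and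
`v ∈ Um_n(R, I)` satisfies `v·ε = e₁` for some `ε ∈ E_n(R)`, then `v·ε' = e₁`
for some `ε' ∈ E_n(R, I)`. -/
theorem trivial_absolute_implies_trivial_relative_of_retract
    (R : Type*) [CommRing R] (I : Ideal R)
    (f : R ⧸ I →+* R)
    (hf : (Ideal.Quotient.mk I).comp f = RingHom.id (R ⧸ I))
    (m : ℕ) (v : Fin (m + 3) → R)
    (hv : v ∈ UmRel (m + 3) R I)
    (ε : GL (Fin (m + 3)) R) (hε : ε ∈ Elem (m + 3) R)
    (h : Matrix.vecMul v (ε : Matrix (Fin (m + 3)) (Fin (m + 3)) R) = rowE1 (m + 3) R) :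
    ∃ ε' ∈ ElemRel (m + 3) R I,
      Matrix.vecMul v (ε' : Matrix (Fin (m + 3)) (Fin (m + 3)) R) = rowE1 (m + 3) R := by
  set φ : R →+* R := f.comp (Ideal.Quotient.mk I) with hφdef
  have hφ : ∀ x : R, φ x - x ∈ I := by
    intro x
    have := RingHom.congr_fun hf (Ideal.Quotient.mk I x)
    simp only [RingHom.comp_apply, RingHom.id_apply] at this
    exact Ideal.Quotient.eq.mp (by simpa [hφdef] using this)
  set Φε := Matrix.GeneralLinearGroup.map φ ε with hΦε
  -- φ ∘ v = rowE1
  have hφv : (fun i => φ (v i)) = rowE1 (m + 3) R := by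
    funext i
    have hvi := hv.2 i
    by_cases hi : i.val = 0
    · rw [if_pos hi] at hvi
      have hmk : Ideal.Quotient.mk I (v i) = 1 := by
        rw [show (1 : R ⧸ I) = Ideal.Quotient.mk I 1 from rfl]
        exact Ideal.Quotient.eq.mpr hvi
      have h2 : φ (v i) = 1 := by
        rw [hφdef, RingHom.comp_apply, hmk, _root_.map_one]
      simp [rowE1, hi, h2]
    · rw [if_neg hi] at hvi
      have hmk : Ideal.Quotient.mk I (v i) = 0 := Ideal.Quotient.eq_zero_iff_mem.mpr hvi
      have h2 : φ (v i) = 0 := by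
        rw [hφdef, RingHom.comp_apply, hmk, _root_.map_zero]
      simp [rowE1, hi, h2]
  -- e₁ · Φε = e₁
  have he1 : vecMul (rowE1 (m + 3) R) (Φε : Matrix (Fin (m + 3)) (Fin (m + 3)) R)
      = rowE1 (m + 3) R := by
    have hval : (Φε : Matrix (Fin (m + 3)) (Fin (m + 3)) R)
        = φ.mapMatrix (ε : Matrix (Fin (m + 3)) (Fin (m + 3)) R) := rfl
    have key := vecMul_mapMatrix φ v (ε : Matrix (Fin (m + 3)) (Fin (m + 3)) R)
    rw [hφv, h] at key
    rw [hval, key]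
    funext j
    by_cases hj : j.val = 0 <;> simp [rowE1, hj]
  -- e₁ · Φε⁻¹ = e₁
  have he1' : vecMul (rowE1 (m + 3) R) ((Φε⁻¹ : GL (Fin (m + 3)) R) :
      Matrix (Fin (m + 3)) (Fin (m + 3)) R) = rowE1 (m + 3) R := by
    have := congrArg (fun w => vecMul w ((Φε⁻¹ : GL (Fin (m + 3)) R) :
      Matrix (Fin (m + 3)) (Fin (m + 3)) R)) he1
    simpa [vecMul_vecMul, Units.mul_inv, vecMul_one] using this.symm
  refine ⟨ε * Φε⁻¹, mul_map_inv_mem I m φ hφ hε, ?_⟩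
  have : ((ε * Φε⁻¹ : GL (Fin (m + 3)) R) : Matrix (Fin (m + 3)) (Fin (m + 3)) R)
      = (ε : Matrix (Fin (m + 3)) (Fin (m + 3)) R) *
        ((Φε⁻¹ : GL (Fin (m + 3)) R) : Matrix (Fin (m + 3)) (Fin (m + 3)) R) := rfl
  rw [this, ← vecMul_vecMul, h, he1']
end

section
/- Let R be a commutative ring, I an ideal of R, D = D(R, I) = {(a, b) ∈ R × R : a − b ∈ I} the double of R along I, and K = {(0, x) : x ∈ I} the kernel of the first projection D → R. Let n ≥ 3 and let v ∈ Um_n(D, K) be such that v·ε = e_1 for some ε ∈ E_n(D). Then there exists ε' ∈ E_n(D, K) with v·ε' = e_1. -/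
open Matrix

/-- The kernel `K = {(0, x) : x ∈ I}` of the first projection `D(R, I) → R`. -/
def DoubleKer (R : Type*) [CommRing R] (I : Ideal R) : Ideal (Double R I) :=
  RingHom.ker ((RingHom.fst R R).comp (Double R I).subtype)


section Aux
variable {n : ℕ} {A : Type*} [CommRing A]

/-- A transvection as an element of `GL`. -/
def transGL (i j : Fin n) (h : i ≠ j) (c : A) : GL (Fin n) A where
  val := Matrix.transvection i j c
  inv := Matrix.transvection i j (-c)
  val_inv := by rw [Matrix.transvection_mul_transvection_same _ _ h]; simp
  inv_val := by rw [Matrix.transvection_mul_transvection_same _ _ h]; simp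

lemma transGL_inv (i j : Fin n) (h : i ≠ j) (c : A) :
    (transGL i j h c)⁻¹ = transGL i j h (-c) := Units.ext rfl

lemma transGL_mul (i j : Fin n) (h : i ≠ j) (c d : A) :
    transGL i j h c * transGL i j h d = transGL i j h (c + d) :=
  Units.ext (Matrix.transvection_mul_transvection_same _ _ h c d)

lemma stdBasisMatrix_neg' (i j : Fin n) (c : A) :
    Matrix.single i j (-c) = -Matrix.single i j c := by
  ext a b
  simp only [Matrix.single, Matrix.of_apply, Matrix.neg_apply]
  split <;> simp

lemma transGL_commutator {i j k : Fin n} (hij : i ≠ j) (hik : i ≠ k) (hkj : k ≠ j)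
    (x y : A) :
    transGL i k hik x * transGL k j hkj y * (transGL i k hik x)⁻¹ *
      (transGL k j hkj y)⁻¹ = transGL i j hij (x * y) := by
  apply Units.ext
  show Matrix.transvection i k x * Matrix.transvection k j y * Matrix.transvection i k (-x) *
      Matrix.transvection k j (-y) = Matrix.transvection i j (x * y)
  simp only [Matrix.transvection]
  have z1 : ∀ c d : A, Matrix.single i k c * Matrix.single i k d = 0 :=
    fun c d => Matrix.single_mul_single_of_ne (c := c) i k i hik.symm d
  have z2 : ∀ c d : A, Matrix.single k j c * Matrix.single i k d = 0 :=
    fun c d => Matrix.single_mul_single_of_ne (c := c) k j i hij.symm d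
  have z3 : ∀ c d : A, Matrix.single i j c * Matrix.single i k d = 0 :=
    fun c d => Matrix.single_mul_single_of_ne (c := c) i j i hij.symm d
  have z4 : ∀ c d : A, Matrix.single k j c * Matrix.single k j d = 0 :=
    fun c d => Matrix.single_mul_single_of_ne (c := c) k j k hkj.symm d
  have z5 : ∀ c d : A, Matrix.single i j c * Matrix.single k j d = 0 :=
    fun c d => Matrix.single_mul_single_of_ne (c := c) i j k hkj.symm d
  simp only [Matrix.add_mul, Matrix.mul_add, Matrix.one_mul, Matrix.mul_one,
    Matrix.single_mul_single_same, z1, z2, z3, z4, z5, Matrix.zero_mul, Matrix.mul_zero,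
    add_zero, zero_add, neg_mul, mul_neg, neg_neg, stdBasisMatrix_neg']
  abel

lemma transGL_mem_Elem (i j : Fin n) (h : i ≠ j) (c : A) :
    transGL i j h c ∈ Elem n A :=
  Subgroup.subset_closure ⟨i, j, h, c, rfl⟩

lemma ElemRel_conj {J : Ideal A} {g x : GL (Fin n) A}
    (hg : g ∈ Elem n A) (hx : x ∈ ElemRel n A J) :
    g * x * g⁻¹ ∈ ElemRel n A J := by
  induction hx using Subgroup.closure_induction with
  | mem y hy =>
    obtain ⟨e, he, w, i, j, hi, hj, hxI, rfl⟩ := hy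
    exact Subgroup.subset_closure ⟨g * e, mul_mem hg he, w, i, j, hi, hj, hxI, by group⟩
  | one => simpa using one_mem _
  | mul a b _ _ pa pb =>
    have e : g * (a * b) * g⁻¹ = g * a * g⁻¹ * (g * b * g⁻¹) := by group
    rw [e]; exact mul_mem pa pb
  | inv a _ pa =>
    have e : g * a⁻¹ * g⁻¹ = (g * a * g⁻¹)⁻¹ := by group
    rw [e]; exact inv_mem pa

lemma transGL_mem_ElemRel {m : ℕ} {A : Type*} [CommRing A] {J : Ideal A}
    {x : A} (hx : x ∈ J) :
    ∀ (i j : Fin (m + 3)) (h : i ≠ j), transGL i j h x ∈ ElemRel (m + 3) A J := by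
  have h10 : (1 : Fin (m + 3)) ≠ 0 := by
    intro hh
    have := congrArg Fin.val hh
    simp [Fin.val_one, Fin.val_zero] at this
  -- commutator absorption lemmas
  have comm1 : ∀ (i k j : Fin (m + 3)) (hik : i ≠ k) (hkj : k ≠ j) (hij : i ≠ j) (c d : A),
      transGL i k hik c ∈ ElemRel (m + 3) A J →
      transGL i j hij (c * d) ∈ ElemRel (m + 3) A J := by
    intro i k j hik hkj hij c d ha
    rw [← transGL_commutator hij hik hkj]
    have h1 : transGL k j hkj d * (transGL i k hik c)⁻¹ * (transGL k j hkj d)⁻¹ ∈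
        ElemRel (m + 3) A J :=
      ElemRel_conj (transGL_mem_Elem _ _ _ _) (inv_mem ha)
    have e : transGL i k hik c * transGL k j hkj d * (transGL i k hik c)⁻¹ *
        (transGL k j hkj d)⁻¹ =
        transGL i k hik c *
          (transGL k j hkj d * (transGL i k hik c)⁻¹ * (transGL k j hkj d)⁻¹) := by group
    rw [e]; exact mul_mem ha h1
  have comm2 : ∀ (i k j : Fin (m + 3)) (hik : i ≠ k) (hkj : k ≠ j) (hij : i ≠ j) (c d : A),
      transGL k j hkj d ∈ ElemRel (m + 3) A J →
      transGL i j hij (c * d) ∈ ElemRel (m + 3) A J := by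
    intro i k j hik hkj hij c d hb
    rw [← transGL_commutator hij hik hkj]
    exact mul_mem (ElemRel_conj (transGL_mem_Elem _ _ _ _) hb) (inv_mem hb)
  have base : ∀ (hh : (1 : Fin (m + 3)) ≠ 0),
      transGL 1 0 hh x ∈ ElemRel (m + 3) A J := by
    intro hh
    exact Subgroup.subset_closure
      ⟨1, one_mem _, transGL 1 0 hh x, 1, 0, Fin.val_one _, Fin.val_zero _,
        ⟨x, hx, rfl⟩, by group⟩
  have stepB : ∀ (j : Fin (m + 3)) (hj : (1 : Fin (m + 3)) ≠ j),
      transGL 1 j hj x ∈ ElemRel (m + 3) A J := by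
    intro j hj
    by_cases hj0 : j = 0
    · subst hj0; exact base hj
    · have h0j : (0 : Fin (m + 3)) ≠ j := fun e => hj0 e.symm
      have := comm1 1 0 j h10 h0j hj x 1 (base h10)
      rwa [mul_one] at this
  have stepC : ∀ (i j : Fin (m + 3)) (hi1 : i ≠ 1) (hj1 : j ≠ 1) (hij : i ≠ j),
      transGL i j hij x ∈ ElemRel (m + 3) A J := by
    intro i j hi1 hj1 hij
    have := comm2 i 1 j hi1 (Ne.symm hj1) hij 1 x (stepB j (Ne.symm hj1))
    rwa [one_mul] at this
  intro i j hij
  by_cases hi1 : i = 1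
  · subst hi1; exact stepB j hij
  · by_cases hj1 : j = 1
    · subst hj1
      -- need a third index k ∉ {i, 1}
      obtain ⟨k, hk_mem, hk1⟩ : ∃ k ∈ Finset.univ.erase i, k ≠ (1 : Fin (m + 3)) := by
        apply Finset.exists_mem_ne
        rw [Finset.card_erase_of_mem (Finset.mem_univ i), Finset.card_univ, Fintype.card_fin]
        omega
      have hki : k ≠ i := Finset.ne_of_mem_erase hk_mem
      have := comm1 i k 1 (Ne.symm hki) hk1 hij x 1 (stepC i k hi1 hk1 (Ne.symm hki))
      rwa [mul_one] at this
    · exact stepC i j hi1 hj1 hij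

lemma map_transGL {B : Type*} [CommRing B] (f : A →+* B) (i j : Fin n) (h : i ≠ j) (c : A) :
    Matrix.GeneralLinearGroup.map f (transGL i j h c) = transGL i j h (f c) := by
  apply Units.ext
  show (RingHom.mapMatrix f) (Matrix.transvection i j c) = Matrix.transvection i j (f c)
  ext a b
  simp [Matrix.transvection, Matrix.single, Matrix.one_apply, Matrix.add_apply,
    RingHom.mapMatrix_apply, Matrix.map_apply, apply_ite f]

lemma vecMul_rowE1 {m : ℕ} {B : Type*} [CommRing B]
    (M : Matrix (Fin (m + 3)) (Fin (m + 3)) B) :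
    Matrix.vecMul (rowE1 (m + 3) B) M = M 0 := by
  ext j
  have hval : ∀ i : Fin (m + 3), i.val = 0 ↔ i = 0 := fun i => by
    constructor
    · intro hh; exact Fin.ext (by simpa using hh)
    · intro hh; subst hh; rfl
  simp only [Matrix.vecMul, dotProduct, rowE1, hval, ite_mul, one_mul, zero_mul]
  simp

end Aux

section Retr
variable (R : Type*) [CommRing R] (I : Ideal R)

/-- The retraction `D(R,I) → D(R,I)`, `(a, b) ↦ (a, a)`. -/
def doubleRetr : Double R I →+* Double R I where
  toFun x := ⟨(x.1.1, x.1.1), show x.1.1 - x.1.1 ∈ I by simp⟩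
  map_one' := rfl
  map_mul' x y := rfl
  map_zero' := rfl
  map_add' x y := rfl

lemma doubleRetr_sub_mem (c : Double R I) : c - doubleRetr R I c ∈ DoubleKer R I := by
  have : ((c - doubleRetr R I c : Double R I) : R × R).1 = 0 := by
    simp [doubleRetr]
  simpa [DoubleKer, RingHom.mem_ker] using this

lemma doubleRetr_of_mem {x : Double R I} (hx : x ∈ DoubleKer R I) :
    doubleRetr R I x = 0 := by
  have h1 : (x : R × R).1 = 0 := by
    simpa [DoubleKer, RingHom.mem_ker] using hx
  apply Subtype.ext
  apply Prod.ext <;> simp [doubleRetr, h1]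

lemma doubleRetr_of_sub_one_mem {x : Double R I} (hx : x - 1 ∈ DoubleKer R I) :
    doubleRetr R I x = 1 := by
  have h1 : ((x - 1 : Double R I) : R × R).1 = 0 := by
    simpa [DoubleKer, RingHom.mem_ker] using hx
  have h2 : (x : R × R).1 = 1 := by
    have h4 : ((x - 1 : Double R I) : R × R).1 = (x : R × R).1 - 1 := rfl
    rw [h4] at h1
    exact sub_eq_zero.mp h1
  apply Subtype.ext
  apply Prod.ext <;> simp [doubleRetr, h2]

lemma mem_ElemRel_of_Elem {m : ℕ}
    {ε : GL (Fin (m + 3)) (Double R I)} (hε : ε ∈ Elem (m + 3) (Double R I)) :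
    ε * (Matrix.GeneralLinearGroup.map (doubleRetr R I) ε)⁻¹ ∈
      ElemRel (m + 3) (Double R I) (DoubleKer R I) := by
  induction hε using Subgroup.closure_induction with
  | mem y hy =>
    obtain ⟨i, j, hij, c, hc⟩ := hy
    have hy' : y = transGL i j hij c := Units.ext hc
    rw [hy', map_transGL, transGL_inv, transGL_mul, ← sub_eq_add_neg]
    exact transGL_mem_ElemRel (doubleRetr_sub_mem R I c) i j hij
  | one => simpa using one_mem _
  | mul a b ha hb pa pb =>
    have e : a * b * (Matrix.GeneralLinearGroup.map (doubleRetr R I) (a * b))⁻¹ =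
        a * (b * (Matrix.GeneralLinearGroup.map (doubleRetr R I) b)⁻¹) * a⁻¹ *
          (a * (Matrix.GeneralLinearGroup.map (doubleRetr R I) a)⁻¹) := by
      rw [_root_.map_mul]; group
    rw [e]
    exact mul_mem (ElemRel_conj ha pb) pa
  | inv a ha pa =>
    have e : a⁻¹ * (Matrix.GeneralLinearGroup.map (doubleRetr R I) a⁻¹)⁻¹ =
        a⁻¹ * (a * (Matrix.GeneralLinearGroup.map (doubleRetr R I) a)⁻¹)⁻¹ * (a⁻¹)⁻¹ := by
      rw [map_inv]; group
    rw [e]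
    exact ElemRel_conj (inv_mem ha) (inv_mem pa)

end Retr

/-- for the double `D = D(R, I)` and the kernel `K` of the first
projection `D → R`, if `v ∈ Um_n(D, K)` (with `n = m + 3 ≥ 3`) satisfies
`v·ε = e₁` for some `ε ∈ E_n(D)`, then `v·ε' = e₁` for some `ε' ∈ E_n(D, K)`. -/
theorem trivial_absolute_implies_trivial_relative_double
    (R : Type*) [CommRing R] (I : Ideal R)
    (m : ℕ) (v : Fin (m + 3) → Double R I)
    (hv : v ∈ UmRel (m + 3) (Double R I) (DoubleKer R I))
    (ε : GL (Fin (m + 3)) (Double R I)) (hε : ε ∈ Elem (m + 3) (Double R I))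
    (h : Matrix.vecMul v (ε : Matrix (Fin (m + 3)) (Fin (m + 3)) (Double R I)) =
      rowE1 (m + 3) (Double R I)) :
    ∃ ε' ∈ ElemRel (m + 3) (Double R I) (DoubleKer R I),
      Matrix.vecMul v (ε' : Matrix (Fin (m + 3)) (Fin (m + 3)) (Double R I)) =
        rowE1 (m + 3) (Double R I) := by
  classical
  refine ⟨ε * (Matrix.GeneralLinearGroup.map (doubleRetr R I) ε)⁻¹,
    mem_ElemRel_of_Elem R I hε, ?_⟩
  have hmul : ((ε * (Matrix.GeneralLinearGroup.map (doubleRetr R I) ε)⁻¹ :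
        GL (Fin (m + 3)) (Double R I)) : Matrix (Fin (m + 3)) (Fin (m + 3)) (Double R I)) =
      (ε : Matrix (Fin (m + 3)) (Fin (m + 3)) (Double R I)) *
        (((Matrix.GeneralLinearGroup.map (doubleRetr R I) ε)⁻¹ :
          GL (Fin (m + 3)) (Double R I)) : Matrix (Fin (m + 3)) (Fin (m + 3)) (Double R I)) :=
    Units.val_mul _ _
  rw [hmul, ← Matrix.vecMul_vecMul, h]
  have hinv : (((Matrix.GeneralLinearGroup.map (doubleRetr R I) ε)⁻¹ :
        GL (Fin (m + 3)) (Double R I)) : Matrix (Fin (m + 3)) (Fin (m + 3)) (Double R I)) =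
      ((ε⁻¹ : GL (Fin (m + 3)) (Double R I)) :
        Matrix (Fin (m + 3)) (Fin (m + 3)) (Double R I)).map (doubleRetr R I) := rfl
  rw [hinv, vecMul_rowE1]
  have hone : (ε : Matrix (Fin (m + 3)) (Fin (m + 3)) (Double R I)) *
      ((ε⁻¹ : GL (Fin (m + 3)) (Double R I)) :
        Matrix (Fin (m + 3)) (Fin (m + 3)) (Double R I)) = 1 := by
    rw [← Units.val_mul, mul_inv_cancel, Units.val_one]
  have hv0 : Matrix.vecMul (rowE1 (m + 3) (Double R I))
      ((ε⁻¹ : GL (Fin (m + 3)) (Double R I)) :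
        Matrix (Fin (m + 3)) (Fin (m + 3)) (Double R I)) = v := by
    rw [← h, Matrix.vecMul_vecMul, hone, Matrix.vecMul_one]
  have hrow : ∀ j, ((ε⁻¹ : GL (Fin (m + 3)) (Double R I)) :
      Matrix (Fin (m + 3)) (Fin (m + 3)) (Double R I)) 0 j = v j := by
    intro j; rw [← hv0, vecMul_rowE1]
  funext j
  rw [Matrix.map_apply, hrow j]
  obtain ⟨-, hcong⟩ := hv
  have hj' := hcong j
  by_cases hj : (j : ℕ) = 0
  · rw [if_pos hj] at hj'
    have := doubleRetr_of_sub_one_mem R I hj'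
    rw [this]
    simp [rowE1, hj]
  · rw [if_neg hj] at hj'
    have := doubleRetr_of_mem R I hj'
    rw [this]
    simp [rowE1, hj]
end
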